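/- Monotone Lemma: Let n ≥ 1, let A ∈ {0,1}^{n×n} be symmetric with a_{ii} = 1 for all i, let t ∈ (0,1), and suppose Ŷ (with 0 ≤ ŷ_{ij} ≤ 1 for all i,j) is the unique maximizer of the objective F_A over the box. Let Ã ∈ {0,1}^{n×n} be any symmetric matrix with ã_{ii} = 1 such that for every pair (i,j) with ã_{ij} ≠ a_{ij}, either a_{ij} = 0, ã_{ij} = 1 and ŷ_{ij} = 1, or a_{ij} = 1, ã_{ij} = 0 and ŷ_{ij} = 0. Then Ŷ is also the unique maximizer of F_Ã over the box. -/

import Mathlib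

open MeasureTheory

open scoped ComplexOrder in
/-- The old Mathlib `Matrix.PosSemidef.sqrt` (removed since), with its old definition. -/
noncomputable def Matrix.PosSemidef.sqrtOld {m 𝕜 : Type*} [Fintype m] [DecidableEq m] [RCLike 𝕜]
    {A : Matrix m m 𝕜} (hA : A.PosSemidef) : Matrix m m 𝕜 :=
  hA.1.eigenvectorUnitary.1 * Matrix.diagonal ((↑) ∘ (Real.sqrt ·) ∘ hA.1.eigenvalues) *
    (star hA.1.eigenvectorUnitary : Matrix m m 𝕜)

/-- Nuclear norm: trace of the positive semidefinite square root of `Yᵀ Y`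
(equivalently, the sum of the singular values of `Y`). -/
noncomputable def nuclearNorm {n : ℕ} (Y : Matrix (Fin n) (Fin n) ℝ) : ℝ :=
  (Matrix.posSemidef_conjTranspose_mul_self Y).sqrtOld.trace

/-- The objective `F_A(Y) = c_𝒜 Σ_{a_ij=1} y_ij − c_{𝒜ᶜ} Σ_{a_ij=0} y_ij − 48√n ‖Y‖_*`
with `c_𝒜 = √((1−t)/t)` and `c_{𝒜ᶜ} = √(t/(1−t))`. -/
noncomputable def objective {n : ℕ} (A : Matrix (Fin n) (Fin n) ℝ) (t : ℝ)
    (Y : Matrix (Fin n) (Fin n) ℝ) : ℝ :=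
  Real.sqrt ((1 - t) / t) * (∑ i, ∑ j, if A i j = 1 then Y i j else 0)
    - Real.sqrt (t / (1 - t)) * (∑ i, ∑ j, if A i j = 0 then Y i j else 0)
    - 48 * Real.sqrt n * nuclearNorm Y

/-- The box `0 ≤ y_ij ≤ 1`. -/
def inBox {n : ℕ} (Y : Matrix (Fin n) (Fin n) ℝ) : Prop :=
  ∀ i j, 0 ≤ Y i j ∧ Y i j ≤ 1

/-- `Y0` is the unique maximizer of `F` over the box. -/
def isUniqueMaximizer {n : ℕ} (F : Matrix (Fin n) (Fin n) ℝ → ℝ)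
    (Y0 : Matrix (Fin n) (Fin n) ℝ) : Prop :=
  inBox Y0 ∧ ∀ Y, inBox Y → Y ≠ Y0 → F Y < F Y0


/-- **Monotone Lemma.** If `Ŷ` is the unique maximizer of `F_A` over the box and `Ã` is
obtained from `A` by only adding edges where `ŷ_ij = 1` and removing edges where
`ŷ_ij = 0`, then `Ŷ` is also the unique maximizer of `F_Ã` over the box. -/
theorem monotone_lemma {n : ℕ} (hn : 1 ≤ n) (t : ℝ) (ht0 : 0 < t) (ht1 : t < 1)
    (A Atil : Matrix (Fin n) (Fin n) ℝ)
    (hA01 : ∀ i j, A i j = 0 ∨ A i j = 1) (hAsymm : A.IsSymm)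
    (hAdiag : ∀ i, A i i = 1)
    (hAtil01 : ∀ i j, Atil i j = 0 ∨ Atil i j = 1) (hAtilsymm : Atil.IsSymm)
    (hAtildiag : ∀ i, Atil i i = 1)
    (Yhat : Matrix (Fin n) (Fin n) ℝ)
    (hopt : isUniqueMaximizer (objective A t) Yhat)
    (hchange : ∀ i j, Atil i j ≠ A i j →
      (A i j = 0 ∧ Atil i j = 1 ∧ Yhat i j = 1) ∨
      (A i j = 1 ∧ Atil i j = 0 ∧ Yhat i j = 0)) :
    isUniqueMaximizer (objective Atil t) Yhat := by
  classical
  set c1 := Real.sqrt ((1 - t) / t) with hc1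
  set c2 := Real.sqrt (t / (1 - t)) with hc2
  have hc1n : 0 ≤ c1 := Real.sqrt_nonneg _
  have hc2n : 0 ≤ c2 := Real.sqrt_nonneg _
  set d : Fin n → Fin n → ℝ := fun i j =>
    c1 * ((if Atil i j = 1 then (1:ℝ) else 0) - (if A i j = 1 then (1:ℝ) else 0))
      - c2 * ((if Atil i j = 0 then (1:ℝ) else 0) - (if A i j = 0 then (1:ℝ) else 0)) with hd
  have key : ∀ Y : Matrix (Fin n) (Fin n) ℝ,
      objective Atil t Y - objective A t Y = ∑ i, ∑ j, d i j * Y i j := by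
    intro Y
    have hpt : ∀ i j, d i j * Y i j =
        (c1 * (if Atil i j = 1 then Y i j else 0) - c2 * (if Atil i j = 0 then Y i j else 0))
        - (c1 * (if A i j = 1 then Y i j else 0) - c2 * (if A i j = 0 then Y i j else 0)) := by
      intro i j
      rcases hAtil01 i j with h | h <;> rcases hA01 i j with h' | h' <;>
        simp [hd, h, h'] <;> ring
    calc objective Atil t Y - objective A t Y
        = ∑ i, ∑ j, ((c1 * (if Atil i j = 1 then Y i j else 0)
            - c2 * (if Atil i j = 0 then Y i j else 0))
          - (c1 * (if A i j = 1 then Y i j else 0)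
            - c2 * (if A i j = 0 then Y i j else 0))) := by
          simp only [objective, Finset.sum_sub_distrib, Finset.mul_sum]
          ring
      _ = ∑ i, ∑ j, d i j * Y i j := by
          refine Finset.sum_congr rfl fun i _ => Finset.sum_congr rfl fun j _ => ?_
          exact (hpt i j).symm
  refine ⟨hopt.1, fun Y hY hne => ?_⟩
  have hstrict := hopt.2 Y hY hne
  have hsum : ∑ i, ∑ j, d i j * Y i j ≤ ∑ i, ∑ j, d i j * Yhat i j := by
    refine Finset.sum_le_sum fun i _ => Finset.sum_le_sum fun j _ => ?_
    by_cases heq : Atil i j = A i j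
    · have : d i j = 0 := by simp [hd, heq]
      simp [this]
    · rcases hchange i j heq with ⟨h0, h1, hy⟩ | ⟨h0, h1, hy⟩
      · have hdv : d i j = c1 + c2 := by simp [hd, h0, h1]
        rw [hdv, hy]
        have := (hY i j).2
        nlinarith [(hY i j).2]
      · have hdv : d i j = -(c1 + c2) := by simp [hd, h0, h1]; ring
        rw [hdv, hy]
        nlinarith [(hY i j).1]
  have k1 := key Y
  have k2 := key Yhat
  linarith
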